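/- arXiv:1201.3350 — 2 statements merged into one kernel-verified Lean document; each statement's English description precedes it below -/
import Mathlib

section
/- Along the upper P-positions of Rational Wythoff Nim the heap-size ratio converges to (q₂ + φ(q₁+q₂))/(p₂ + φ(p₁+p₂)): for every ε > 0 there exists N such that every P-position (A,B) of Rational Wythoff Nim with A ≥ N and B/A ≥ (q₁+q₂)/(p₁+p₂) satisfies |B/A − (q₂ + φ(q₁+q₂))/(p₂ + φ(p₁+p₂))| < ε, where φ := (1+√5)/2. -/
/-- Membership in the set of allowed positions `B_Q`. -/
def inBQ (p1 q1 p2 q2 : ℕ) (pos : ℕ × ℕ) : Prop :=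
  pos.1 * q1 ≤ pos.2 * p1 ∧ pos.2 * p2 ≤ pos.1 * q2

/-- Membership in the set `T_Q` (the inequalities are read in ℤ). -/
def inTQ (p1 q1 p2 q2 : ℕ) (pos : ℕ × ℕ) : Prop :=
  inBQ p1 q1 p2 q2 pos ∧
    (p1 : ℤ) * ((pos.2 : ℤ) - (q2 : ℤ)) < (q1 : ℤ) * ((pos.1 : ℤ) - (p2 : ℤ)) ∧
    (p2 : ℤ) * ((pos.2 : ℤ) - (q1 : ℤ)) > (q2 : ℤ) * ((pos.1 : ℤ) - (p1 : ℤ))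

/-- A legal move of the Q-subtraction game `G_Q(M)`. -/
def QMove (p1 q1 p2 q2 : ℕ) (M : Set (ℕ × ℕ)) (pos pos' : ℕ × ℕ) : Prop :=
  ∃ s t : ℕ, (s, t) ∈ M ∧
    p1 * s + p2 * t ≤ pos.1 ∧ q1 * s + q2 * t ≤ pos.2 ∧
    pos'.1 = pos.1 - (p1 * s + p2 * t) ∧ pos'.2 = pos.2 - (q1 * s + q2 * t) ∧
    inBQ p1 q1 p2 q2 pos'

/-- `pos` is a P-position of the game with move relation `move`: every legal move
leads to a non-P-position.  (Every legal move of the games considered here strictly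
decreases the coordinate sum, which makes the recursion well-founded.) -/
def PPos (move : ℕ × ℕ → ℕ × ℕ → Prop) : ℕ × ℕ → Prop
  | pos => ∀ pos', move pos pos' → pos'.1 + pos'.2 < pos.1 + pos.2 → ¬ PPos move pos'
termination_by pos => pos.1 + pos.2

/-- The move set of Rational Wythoff Nim. -/
def MRW : Set (ℕ × ℕ) := {m | ∃ t : ℕ, 1 ≤ t ∧ (m = (0, t) ∨ m = (t, 0) ∨ m = (t, t))}

/-- The golden ratio `φ = (1+√5)/2`. -/
noncomputable def phi : ℝ := (1 + Real.sqrt 5) / 2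

open Real goldenRatio

lemma phi_eq : phi = goldenRatio := rfl
lemma phi_sq : phi ^ 2 = phi + 1 := Real.goldenRatio_sq
lemma one_lt_phi : 1 < phi := Real.one_lt_goldenRatio
lemma phi_lt_two : phi < 2 := Real.goldenRatio_lt_two
lemma phi_pos : 0 < phi := Real.goldenRatio_pos

/-- Lower Wythoff sequence. -/
noncomputable def wa (n : ℕ) : ℕ := ⌊(n : ℝ) * phi⌋₊

/-- Upper Wythoff sequence. -/
noncomputable def wb (n : ℕ) : ℕ := wa n + n

/-- The set of Wythoff P-positions. -/
def WS : Set (ℕ × ℕ) := {p | ∃ n : ℕ, p = (wa n, wb n) ∨ p = (wb n, wa n)}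

lemma wa_le (n : ℕ) : (wa n : ℝ) ≤ n * phi :=
  Nat.floor_le (mul_nonneg (Nat.cast_nonneg n) phi_pos.le)

lemma lt_wa (n : ℕ) : (n : ℝ) * phi < wa n + 1 :=
  Nat.lt_floor_add_one _

lemma wa_zero : wa 0 = 0 := by simp [wa]

lemma le_wa (n : ℕ) : n ≤ wa n := by
  apply Nat.le_floor
  nlinarith [one_lt_phi, Nat.cast_nonneg (α := ℝ) n]

lemma wa_lt_wa {m n : ℕ} (h : m < n) : wa m < wa n := by
  have h1 : (wa m : ℝ) + 1 < wa n + 1 := by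
    have : (m : ℝ) * phi + 1 ≤ (n : ℝ) * phi := by
      have : (m : ℝ) + 1 ≤ n := by exact_mod_cast h
      nlinarith [one_lt_phi]
    calc (wa m : ℝ) + 1 ≤ m * phi + 1 := by linarith [wa_le m]
      _ ≤ n * phi := this
      _ < wa n + 1 := lt_wa n
  exact_mod_cast (by linarith : (wa m : ℝ) < wa n)

lemma wa_eq_zero {n : ℕ} : wa n = 0 ↔ n = 0 := by
  constructor
  · intro h; by_contra hn
    have := le_wa n; omega
  · intro h; simp [h, wa_zero]

lemma wa_inj {m n : ℕ} (h : wa m = wa n) : m = n := by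
  rcases lt_trichotomy m n with h' | h' | h'
  · exact absurd h (wa_lt_wa h').ne
  · exact h'
  · exact absurd h.symm (wa_lt_wa h').ne

lemma phi_conj : Real.HolderConjugate phi (phi + 1) := by
  rw [Real.holderConjugate_iff]; constructor
  · exact one_lt_phi
  · have h : phi ^ 2 = phi + 1 := phi_sq
    have h1 : (0:ℝ) < phi := phi_pos
    have h2 : (0:ℝ) < phi + 1 := by linarith
    field_simp
    nlinarith [h]

lemma wa_cast_int (n : ℕ) : (wa n : ℤ) = ⌊(n : ℝ) * phi⌋ :=
  Int.natCast_floor_eq_floor (mul_nonneg (Nat.cast_nonneg n) phi_pos.le)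

lemma wb_cast_int (n : ℕ) : (wb n : ℤ) = ⌊(n : ℝ) * (phi + 1)⌋ := by
  have : (n : ℝ) * (phi + 1) = (n : ℝ) * phi + (n : ℤ) := by push_cast; ring
  rw [wb, this, Int.floor_add_intCast, ← wa_cast_int]
  push_cast; ring

/-- Complementarity of the two Wythoff sequences (from Rayleigh's theorem). -/
lemma compl_main (x : ℕ) (hx : 1 ≤ x) :
    ((∃ n, 1 ≤ n ∧ wa n = x) ∧ ¬(∃ n, 1 ≤ n ∧ wb n = x)) ∨
    ((∃ n, 1 ≤ n ∧ wb n = x) ∧ ¬(∃ n, 1 ≤ n ∧ wa n = x)) := by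
  have E := Irrational.beattySeq_symmDiff_beattySeq_pos phi_conj (phi_eq ▸ Real.goldenRatio_irrational)
  have hx' : (x : ℤ) ∈ {n : ℤ | 0 < n} := by
    simp only [Set.mem_setOf_eq]; exact_mod_cast hx
  rw [← E, Set.mem_symmDiff] at hx'
  have ha : ∀ y : ℕ, ((y : ℤ) ∈ {x | ∃ k > 0, beattySeq phi k = x}) ↔ (∃ n, 1 ≤ n ∧ wa n = y) := by
    intro y
    constructor
    · rintro ⟨k, hk, hke⟩
      lift k to ℕ using hk.le
      refine ⟨k, by exact_mod_cast hk, ?_⟩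
      have : (wa k : ℤ) = (y : ℤ) := by rw [wa_cast_int]; exact hke
      exact_mod_cast this
    · rintro ⟨n, hn, rfl⟩
      exact ⟨(n : ℤ), by exact_mod_cast hn, (wa_cast_int n).symm⟩
  have hb : ∀ y : ℕ, ((y : ℤ) ∈ {x | ∃ k > 0, beattySeq (phi + 1) k = x}) ↔ (∃ n, 1 ≤ n ∧ wb n = y) := by
    intro y
    constructor
    · rintro ⟨k, hk, hke⟩
      lift k to ℕ using hk.le
      refine ⟨k, by exact_mod_cast hk, ?_⟩
      have : (wb k : ℤ) = (y : ℤ) := by rw [wb_cast_int]; exact hke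
      exact_mod_cast this
    · rintro ⟨n, hn, rfl⟩
      exact ⟨(n : ℤ), by exact_mod_cast hn, (wb_cast_int n).symm⟩
  rcases hx' with ⟨h1, h2⟩ | ⟨h1, h2⟩
  · exact Or.inl ⟨(ha x).1 h1, fun h => h2 ((hb x).2 h)⟩
  · exact Or.inr ⟨(hb x).1 h1, fun h => h2 ((ha x).2 h)⟩

lemma wa_ne_wb {n m : ℕ} (hn : 1 ≤ n) (hm : 1 ≤ m) : wa n ≠ wb m := by
  intro h
  have hx : 1 ≤ wa n := by
    have := le_wa n; omega
  rcases compl_main (wa n) hx with ⟨_, h2⟩ | ⟨_, h2⟩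
  · exact h2 ⟨m, hm, h.symm⟩
  · exact h2 ⟨n, hn, rfl⟩

/-- Abstract Wythoff move. -/
def WMove (p p' : ℕ × ℕ) : Prop :=
  ∃ k : ℕ, 1 ≤ k ∧ ((p'.1 + k = p.1 ∧ p'.2 = p.2) ∨ (p'.1 = p.1 ∧ p'.2 + k = p.2) ∨
    (p'.1 + k = p.1 ∧ p'.2 + k = p.2))

lemma WS_swap {p : ℕ × ℕ} (h : p ∈ WS) : (p.2, p.1) ∈ WS := by
  obtain ⟨n, h | h⟩ := h <;> exact ⟨n, by simp [h]⟩

lemma WMove_swap {p p' : ℕ × ℕ} (h : WMove p p') : WMove (p.2, p.1) (p'.2, p'.1) := by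
  obtain ⟨k, hk, h⟩ := h
  exact ⟨k, hk, by tauto⟩

lemma zero_mem_WS : ((0, 0) : ℕ × ℕ) ∈ WS := ⟨0, by simp [wa_zero, wb]⟩

lemma wb_lt_wb {m n : ℕ} (h : m < n) : wb m < wb n := by
  have := wa_lt_wa h; unfold wb; omega

lemma wb_inj {m n : ℕ} (h : wb m = wb n) : m = n := by
  rcases lt_trichotomy m n with h' | h' | h'
  · exact absurd h (wb_lt_wb h').ne
  · exact h'
  · exact absurd h.symm (wb_lt_wb h').ne

lemma WS_no_move_aux {n : ℕ} {p' : ℕ × ℕ} (hm : WMove (wa n, wb n) p') (hp' : p' ∈ WS) :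
    False := by
  obtain ⟨k, hk, hc⟩ := hm
  obtain ⟨m, hm' | hm'⟩ := hp'
  · -- p' = (wa m, wb m)
    rcases hc with ⟨h1, h2⟩ | ⟨h1, h2⟩ | ⟨h1, h2⟩ <;> rw [hm'] at h1 h2 <;> simp at h1 h2
    · -- wa m + k = wa n, wb m = wb n
      have : m = n := wb_inj h2
      subst this; omega
    · have : m = n := wa_inj h1
      subst this; omega
    · -- wa m + k = wa n, wb m + k = wb n : differences equal: m = n
      have hmn : m = n := by unfold wb at h2; omega
      subst hmn; omega
  · -- p' = (wb m, wa m)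
    rcases hc with ⟨h1, h2⟩ | ⟨h1, h2⟩ | ⟨h1, h2⟩ <;> rw [hm'] at h1 h2 <;> simp at h1 h2
    · -- wb m + k = wa n, wa m = wb n
      have hn : 1 ≤ n := by
        by_contra h
        have : n = 0 := by omega
        subst this; rw [wa_zero] at h1; omega
      have hm1 : 1 ≤ m := by
        by_contra h
        have : m = 0 := by omega
        subst this; rw [wa_zero] at h2
        have := wa_eq_zero.1 (by unfold wb at h2; omega : wa n = 0); omega
      exact wa_ne_wb hm1 hn h2
    · -- wb m = wa n, wa m + k = wb n
      have hn : 1 ≤ n := by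
        by_contra h
        have : n = 0 := by omega
        subst this; unfold wb at h2; rw [wa_zero] at h2; omega
      have hm1 : 1 ≤ m := by
        by_contra h
        have : m = 0 := by omega
        subst this; unfold wb at h1; rw [wa_zero] at h1
        have := wa_eq_zero.1 (by omega : wa n = 0); omega
      exact wa_ne_wb hn hm1 h1.symm
    · -- wb m + k = wa n, wa m + k = wb n : n + m = 0
      unfold wb at h1 h2
      obtain ⟨rfl, rfl⟩ : m = 0 ∧ n = 0 := by omega
      rw [wa_zero] at h1; omega

lemma WS_no_move {p p' : ℕ × ℕ} (hp : p ∈ WS) (hm : WMove p p') (hp' : p' ∈ WS) : False := by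
  obtain ⟨n, h | h⟩ := hp
  · exact WS_no_move_aux (h ▸ hm) hp'
  · have := WMove_swap hm
    rw [h] at this
    exact WS_no_move_aux this (WS_swap hp')

lemma WS_reach_aux {x y : ℕ} (hxy : x ≤ y) (hp : (x, y) ∉ WS) :
    ∃ p', p' ∈ WS ∧ WMove (x, y) p' := by
  rcases Nat.eq_zero_or_pos x with rfl | hx
  · have hy : 1 ≤ y := by
      rcases Nat.eq_zero_or_pos y with rfl | h
      · exact absurd zero_mem_WS hp
      · exact h
    exact ⟨(0, 0), zero_mem_WS, ⟨y, hy, Or.inr (Or.inl ⟨rfl, by simp⟩)⟩⟩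
  rcases compl_main x hx with ⟨⟨m, hm, hwa⟩, _⟩ | ⟨⟨m, hm, hwb⟩, _⟩
  · -- x = wa m
    rcases lt_trichotomy y (wb m) with hy | hy | hy
    · -- y < wb m
      set d := y - x with hd
      rcases Nat.eq_zero_or_pos d with hd0 | hd1
      · -- x = y, diagonal to (0,0)
        have : x = y := by omega
        subst this
        exact ⟨(0, 0), zero_mem_WS, ⟨x, hx, Or.inr (Or.inr ⟨by simp, by simp⟩)⟩⟩
      · have hdm : d < m := by
          have := hwa; unfold wb at hy; omega
        have hlt : wa d < x := hwa ▸ wa_lt_wa hdm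
        refine ⟨(wa d, wb d), ⟨d, Or.inl rfl⟩, ⟨x - wa d, by omega, Or.inr (Or.inr ⟨?_, ?_⟩)⟩⟩
        · show wa d + (x - wa d) = x; omega
        · show wb d + (x - wa d) = y; unfold wb; omega
    · exact absurd ⟨m, Or.inl (by rw [← hwa, ← hy])⟩ hp
    · -- y > wb m : reduce y to wb m
      refine ⟨(wa m, wb m), ⟨m, Or.inl rfl⟩, ⟨y - wb m, by omega,
        Or.inr (Or.inl ⟨by simp [hwa], ?_⟩)⟩⟩
      show wb m + (y - wb m) = y; omega
  · -- x = wb m : reduce y to wa m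
    have hlt : wa m < x := by rw [← hwb]; unfold wb; omega
    refine ⟨(wb m, wa m), ⟨m, Or.inr rfl⟩, ⟨y - wa m, by omega,
      Or.inr (Or.inl ⟨by simp [hwb], ?_⟩)⟩⟩
    show wa m + (y - wa m) = y; omega

lemma WS_reach {p : ℕ × ℕ} (hp : p ∉ WS) : ∃ p', p' ∈ WS ∧ WMove p p' := by
  obtain ⟨x, y⟩ := p
  rcases le_total x y with h | h
  · exact WS_reach_aux h hp
  · have : (y, x) ∉ WS := fun hc => hp (by simpa using WS_swap hc)
    obtain ⟨p', hp', hm⟩ := WS_reach_aux h this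
    exact ⟨(p'.2, p'.1), WS_swap hp', by simpa using WMove_swap hm⟩

lemma WS_bound {a b : ℕ} (h : (a, b) ∈ WS) (hab : a ≤ b) :
    0 ≤ (b : ℝ) - phi * a ∧ (b : ℝ) - phi * a < 1 := by
  obtain ⟨n, hn | hn⟩ := h
  · rw [Prod.mk.injEq] at hn
    obtain ⟨rfl, rfl⟩ := hn
    have h1 := wa_le n
    have h2 := lt_wa n
    have hb : (wb n : ℝ) = wa n + n := by rw [wb]; push_cast; ring
    have hsq : phi ^ 2 = phi + 1 := phi_sq
    have h3 := one_lt_phi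
    have h4 := phi_lt_two
    constructor
    · rw [hb]; nlinarith
    · rw [hb]; nlinarith
  · rw [Prod.mk.injEq] at hn
    obtain ⟨rfl, rfl⟩ := hn
    have : n = 0 := by unfold wb at hab; omega
    subst this
    rw [wa_zero]; unfold wb; rw [wa_zero]
    norm_num

section Game
variable {p1 q1 p2 q2 : ℕ}

lemma sigma_tau_id (hD : q1 * p2 < p1 * q2) {A B : ℕ} (h : inBQ p1 q1 p2 q2 (A, B)) :
    (A * q2 - B * p2) * p1 + (B * p1 - A * q1) * p2 = A * (p1 * q2 - q1 * p2) ∧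
    (A * q2 - B * p2) * q1 + (B * p1 - A * q1) * q2 = B * (p1 * q2 - q1 * p2) := by
  have h1 : A * q1 ≤ B * p1 := h.1
  have h2 : B * p2 ≤ A * q2 := h.2
  constructor <;> · zify [h1, h2, hD.le]; ring

lemma move_sum_lt (hp1 : 0 < p1) (hq2 : 0 < q2) {pos pos' : ℕ × ℕ}
    (h : QMove p1 q1 p2 q2 MRW pos pos') : pos'.1 + pos'.2 < pos.1 + pos.2 := by
  obtain ⟨s, t, hM, hXA, hYB, e1, e2, _⟩ := h
  have hpos : 0 < (p1 * s + p2 * t) + (q1 * s + q2 * t) := by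
    obtain ⟨u, hu, hc | hc | hc⟩ := hM <;>
      rw [Prod.mk.injEq] at hc <;> obtain ⟨rfl, rfl⟩ := hc
    · have := Nat.mul_le_mul hq2 hu; omega
    · have := Nat.mul_le_mul hp1 hu; omega
    · have := Nat.mul_le_mul hp1 hu; omega
  omega

lemma move_build (hD : q1 * p2 < p1 * q2)
    {A B s t : ℕ} (h : inBQ p1 q1 p2 q2 (A, B)) (hM : (s, t) ∈ MRW)
    (hs : s * (p1 * q2 - q1 * p2) ≤ A * q2 - B * p2)
    (ht : t * (p1 * q2 - q1 * p2) ≤ B * p1 - A * q1) :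
    QMove p1 q1 p2 q2 MRW (A, B) (A - (p1 * s + p2 * t), B - (q1 * s + q2 * t)) ∧
    (A - (p1 * s + p2 * t)) * q2 - (B - (q1 * s + q2 * t)) * p2
      = (A * q2 - B * p2) - s * (p1 * q2 - q1 * p2) ∧
    (B - (q1 * s + q2 * t)) * p1 - (A - (p1 * s + p2 * t)) * q1
      = (B * p1 - A * q1) - t * (p1 * q2 - q1 * p2) := by
  have h1 : A * q1 ≤ B * p1 := h.1
  have h2 : B * p2 ≤ A * q2 := h.2
  have hD1 : 0 < p1 * q2 - q1 * p2 := by omega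
  obtain ⟨idA, idB⟩ := sigma_tau_id hD h
  -- resource bounds
  have hXA : p1 * s + p2 * t ≤ A := by
    have key : (p1 * s + p2 * t) * (p1 * q2 - q1 * p2) ≤ A * (p1 * q2 - q1 * p2) := by
      calc (p1 * s + p2 * t) * (p1 * q2 - q1 * p2)
          = (s * (p1 * q2 - q1 * p2)) * p1 + (t * (p1 * q2 - q1 * p2)) * p2 := by ring
        _ ≤ (A * q2 - B * p2) * p1 + (B * p1 - A * q1) * p2 :=
            Nat.add_le_add (Nat.mul_le_mul_right _ hs) (Nat.mul_le_mul_right _ ht)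
        _ = A * (p1 * q2 - q1 * p2) := idA
    exact Nat.le_of_mul_le_mul_right key hD1
  have hYB : q1 * s + q2 * t ≤ B := by
    have key : (q1 * s + q2 * t) * (p1 * q2 - q1 * p2) ≤ B * (p1 * q2 - q1 * p2) := by
      calc (q1 * s + q2 * t) * (p1 * q2 - q1 * p2)
          = (s * (p1 * q2 - q1 * p2)) * q1 + (t * (p1 * q2 - q1 * p2)) * q2 := by ring
        _ ≤ (A * q2 - B * p2) * q1 + (B * p1 - A * q1) * q2 :=
            Nat.add_le_add (Nat.mul_le_mul_right _ hs) (Nat.mul_le_mul_right _ ht)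
        _ = B * (p1 * q2 - q1 * p2) := idB
    exact Nat.le_of_mul_le_mul_right key hD1
  -- integer versions
  have hsz : (s : ℤ) * ((p1 : ℤ) * q2 - q1 * p2) ≤ (A : ℤ) * q2 - B * p2 := by
    zify [h2, hD.le] at hs; linarith
  have htz : (t : ℤ) * ((p1 : ℤ) * q2 - q1 * p2) ≤ (B : ℤ) * p1 - A * q1 := by
    zify [h1, hD.le] at ht; linarith
  have hg1 : (A - (p1 * s + p2 * t)) * q1 ≤ (B - (q1 * s + q2 * t)) * p1 := by
    zify [hXA, hYB]
    nlinarith [htz]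
  have hg2 : (B - (q1 * s + q2 * t)) * p2 ≤ (A - (p1 * s + p2 * t)) * q2 := by
    zify [hXA, hYB]
    nlinarith [hsz]
  have hBQ' : inBQ p1 q1 p2 q2 (A - (p1 * s + p2 * t), B - (q1 * s + q2 * t)) := ⟨hg1, hg2⟩
  refine ⟨⟨s, t, hM, hXA, hYB, rfl, rfl, hBQ'⟩, ?_, ?_⟩
  · zify [hg2, hs, h2, hXA, hYB, hD.le]; ring
  · zify [hg1, ht, h1, hXA, hYB, hD.le]; ring

lemma move_analyze (hD : q1 * p2 < p1 * q2) {A B : ℕ} {pos' : ℕ × ℕ}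
    (h : inBQ p1 q1 p2 q2 (A, B)) (hmv : QMove p1 q1 p2 q2 MRW (A, B) pos') :
    ∃ s t : ℕ, (s, t) ∈ MRW ∧
      s * (p1 * q2 - q1 * p2) ≤ A * q2 - B * p2 ∧
      t * (p1 * q2 - q1 * p2) ≤ B * p1 - A * q1 ∧
      pos' = (A - (p1 * s + p2 * t), B - (q1 * s + q2 * t)) := by
  have h1 : A * q1 ≤ B * p1 := h.1
  have h2 : B * p2 ≤ A * q2 := h.2
  obtain ⟨s, t, hM, hXA, hYB, e1, e2, hBQ'⟩ := hmv
  obtain ⟨P1, P2⟩ := pos'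
  simp only at e1 e2
  subst e1; subst e2
  have hb1 : (A - (p1 * s + p2 * t)) * q1 ≤ (B - (q1 * s + q2 * t)) * p1 := hBQ'.1
  have hb2 : (B - (q1 * s + q2 * t)) * p2 ≤ (A - (p1 * s + p2 * t)) * q2 := hBQ'.2
  refine ⟨s, t, hM, ?_, ?_, rfl⟩
  · zify [h2, hD.le]
    zify [hXA, hYB] at hb2
    nlinarith [hb2]
  · zify [h1, hD.le]
    zify [hXA, hYB] at hb1
    nlinarith [hb1]

lemma char (hp1 : 0 < p1) (hq2 : 0 < q2) (hD : q1 * p2 < p1 * q2) :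
    ∀ n A B, A + B ≤ n → inBQ p1 q1 p2 q2 (A, B) →
      (PPos (QMove p1 q1 p2 q2 MRW) (A, B) ↔
        ((A * q2 - B * p2) / (p1 * q2 - q1 * p2),
         (B * p1 - A * q1) / (p1 * q2 - q1 * p2)) ∈ WS) := by
  intro n
  induction n with
  | zero =>
    intro A B hAB h
    obtain ⟨rfl, rfl⟩ : A = 0 ∧ B = 0 := by omega
    constructor
    · intro _
      simpa using zero_mem_WS
    · intro _
      rw [PPos]
      intro pos' hmv hlt
      exact absurd hlt (by omega)
  | succ n IH =>
    intro A B hAB h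
    have hD1 : 0 < p1 * q2 - q1 * p2 := by omega
    have hdiv_le : ∀ x : ℕ, (x / (p1 * q2 - q1 * p2)) * (p1 * q2 - q1 * p2) ≤ x :=
      fun x => Nat.div_mul_le_self x _
    constructor
    · -- PPos → WS
      intro hP
      by_contra hWS
      obtain ⟨p', hp', k, hk, hcase⟩ := WS_reach hWS
      -- choose (s,t) according to the move type
      obtain ⟨s, t, hM, hsk, htk, hnew⟩ :
          ∃ s t : ℕ, (s, t) ∈ MRW ∧
            s * (p1 * q2 - q1 * p2) ≤ A * q2 - B * p2 ∧
            t * (p1 * q2 - q1 * p2) ≤ B * p1 - A * q1 ∧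
            p' = (((A * q2 - B * p2) - s * (p1 * q2 - q1 * p2)) / (p1 * q2 - q1 * p2),
                  ((B * p1 - A * q1) - t * (p1 * q2 - q1 * p2)) / (p1 * q2 - q1 * p2)) := by
        rcases hcase with ⟨e1, e2⟩ | ⟨e1, e2⟩ | ⟨e1, e2⟩
        · simp only at e1 e2
          refine ⟨k, 0, ⟨k, hk, Or.inr (Or.inl rfl)⟩, ?_, by simp, ?_⟩
          · calc k * (p1 * q2 - q1 * p2)
                ≤ ((A * q2 - B * p2) / (p1 * q2 - q1 * p2)) * (p1 * q2 - q1 * p2) :=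
                  Nat.mul_le_mul_right _ (by omega)
              _ ≤ A * q2 - B * p2 := hdiv_le _
          · have hkle : k ≤ (A * q2 - B * p2) / (p1 * q2 - q1 * p2) := by omega
            have := Nat.sub_mul_div_of_le (A * q2 - B * p2) (p1 * q2 - q1 * p2) k
              (by rw [mul_comm]; calc k * (p1 * q2 - q1 * p2)
                    ≤ ((A * q2 - B * p2) / (p1 * q2 - q1 * p2)) * (p1 * q2 - q1 * p2) :=
                      Nat.mul_le_mul_right _ hkle
                  _ ≤ A * q2 - B * p2 := hdiv_le _)
            rw [Prod.mk.injEq]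
            constructor
            · rw [mul_comm k _, this]; omega
            · simp; omega
        · simp only at e1 e2
          refine ⟨0, k, ⟨k, hk, Or.inl rfl⟩, by simp, ?_, ?_⟩
          · calc k * (p1 * q2 - q1 * p2)
                ≤ ((B * p1 - A * q1) / (p1 * q2 - q1 * p2)) * (p1 * q2 - q1 * p2) :=
                  Nat.mul_le_mul_right _ (by omega)
              _ ≤ B * p1 - A * q1 := hdiv_le _
          · have hkle : k ≤ (B * p1 - A * q1) / (p1 * q2 - q1 * p2) := by omega
            have := Nat.sub_mul_div_of_le (B * p1 - A * q1) (p1 * q2 - q1 * p2) k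
              (by rw [mul_comm]; calc k * (p1 * q2 - q1 * p2)
                    ≤ ((B * p1 - A * q1) / (p1 * q2 - q1 * p2)) * (p1 * q2 - q1 * p2) :=
                      Nat.mul_le_mul_right _ hkle
                  _ ≤ B * p1 - A * q1 := hdiv_le _)
            rw [Prod.mk.injEq]
            constructor
            · simp; omega
            · rw [mul_comm k _, this]; omega
        · simp only at e1 e2
          refine ⟨k, k, ⟨k, hk, Or.inr (Or.inr rfl)⟩, ?_, ?_, ?_⟩
          · calc k * (p1 * q2 - q1 * p2)
                ≤ ((A * q2 - B * p2) / (p1 * q2 - q1 * p2)) * (p1 * q2 - q1 * p2) :=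
                  Nat.mul_le_mul_right _ (by omega)
              _ ≤ A * q2 - B * p2 := hdiv_le _
          · calc k * (p1 * q2 - q1 * p2)
                ≤ ((B * p1 - A * q1) / (p1 * q2 - q1 * p2)) * (p1 * q2 - q1 * p2) :=
                  Nat.mul_le_mul_right _ (by omega)
              _ ≤ B * p1 - A * q1 := hdiv_le _
          · have hkle1 : k ≤ (A * q2 - B * p2) / (p1 * q2 - q1 * p2) := by omega
            have hkle2 : k ≤ (B * p1 - A * q1) / (p1 * q2 - q1 * p2) := by omega
            have t1 := Nat.sub_mul_div_of_le (A * q2 - B * p2) (p1 * q2 - q1 * p2) k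
              (by rw [mul_comm]; calc k * (p1 * q2 - q1 * p2)
                    ≤ ((A * q2 - B * p2) / (p1 * q2 - q1 * p2)) * (p1 * q2 - q1 * p2) :=
                      Nat.mul_le_mul_right _ hkle1
                  _ ≤ A * q2 - B * p2 := hdiv_le _)
            have t2 := Nat.sub_mul_div_of_le (B * p1 - A * q1) (p1 * q2 - q1 * p2) k
              (by rw [mul_comm]; calc k * (p1 * q2 - q1 * p2)
                    ≤ ((B * p1 - A * q1) / (p1 * q2 - q1 * p2)) * (p1 * q2 - q1 * p2) :=
                      Nat.mul_le_mul_right _ hkle2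
                  _ ≤ B * p1 - A * q1 := hdiv_le _)
            rw [Prod.mk.injEq]
            constructor
            · rw [mul_comm k _, t1]; omega
            · rw [mul_comm k _, t2]; omega
      obtain ⟨hmv, eσ, eτ⟩ := move_build hD h hM hsk htk
      set A' := A - (p1 * s + p2 * t) with hA'
      set B' := B - (q1 * s + q2 * t) with hB'
      have hlt : A' + B' < A + B := move_sum_lt hp1 hq2 hmv
      have hb : inBQ p1 q1 p2 q2 (A', B') := by
        obtain ⟨_, _, _, _, _, _, _, hb⟩ := hmv
        exact hb
      have hP' : PPos (QMove p1 q1 p2 q2 MRW) (A', B') := by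
        rw [IH A' B' (by omega) hb, eσ, eτ, ← hnew]
        exact hp'
      rw [PPos] at hP
      exact hP (A', B') hmv (by simpa using hlt) hP'
    · -- WS → PPos
      intro hWS
      rw [PPos]
      intro pos' hmv hlt hP'
      have hmv' := hmv
      obtain ⟨s, t, hM, hsk, htk, rfl⟩ := move_analyze hD h hmv'
      obtain ⟨hmv2, eσ, eτ⟩ := move_build hD h hM hsk htk
      set A' := A - (p1 * s + p2 * t) with hA'
      set B' := B - (q1 * s + q2 * t) with hB'
      have hb : inBQ p1 q1 p2 q2 (A', B') := by
        obtain ⟨_, _, _, _, _, _, _, hb⟩ := hmv2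
        exact hb
      have hWS' := (IH A' B' (by simp only at hlt; omega) hb).1 hP'
      rw [eσ, eτ] at hWS'
      -- now derive a Wythoff move and contradict WS_no_move
      have hsle : s ≤ (A * q2 - B * p2) / (p1 * q2 - q1 * p2) :=
        (Nat.le_div_iff_mul_le hD1).2 hsk
      have htle : t ≤ (B * p1 - A * q1) / (p1 * q2 - q1 * p2) :=
        (Nat.le_div_iff_mul_le hD1).2 htk
      have t1 := Nat.sub_mul_div_of_le (A * q2 - B * p2) (p1 * q2 - q1 * p2) s
        (by rw [mul_comm]; exact hsk)
      have t2 := Nat.sub_mul_div_of_le (B * p1 - A * q1) (p1 * q2 - q1 * p2) t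
        (by rw [mul_comm]; exact htk)
      rw [mul_comm _ s] at t1
      rw [mul_comm _ t] at t2
      refine WS_no_move hWS (p' := (((A * q2 - B * p2) - s * (p1 * q2 - q1 * p2)) / (p1 * q2 - q1 * p2),
        ((B * p1 - A * q1) - t * (p1 * q2 - q1 * p2)) / (p1 * q2 - q1 * p2))) ?_ hWS'
      obtain ⟨u, hu, hc | hc | hc⟩ := hM <;> rw [Prod.mk.injEq] at hc
      · obtain ⟨rfl, rfl⟩ := hc
        exact ⟨t, hu, Or.inr (Or.inl ⟨by simp, by simp only; omega⟩)⟩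
      · obtain ⟨rfl, rfl⟩ := hc
        exact ⟨s, hu, Or.inl ⟨by simp only; omega, by simp⟩⟩
      · obtain ⟨rfl, hc2⟩ := hc
        subst hc2
        exact ⟨t, hu, Or.inr (Or.inr ⟨by simp only; omega, by simp only; omega⟩)⟩

end Game

set_option maxHeartbeats 1000000 in
theorem stmt_14 (p1 q1 p2 q2 : ℕ) (hp1 : 0 < p1) (hq2 : 0 < q2)
    (hD : q1 * p2 < p1 * q2) (ε : ℝ) (hε : 0 < ε) :
    ∃ N : ℕ, ∀ A B : ℕ, inBQ p1 q1 p2 q2 (A, B) →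
      PPos (QMove p1 q1 p2 q2 MRW) (A, B) → N ≤ A →
      ((q1 : ℝ) + (q2 : ℝ)) / ((p1 : ℝ) + (p2 : ℝ)) ≤ (B : ℝ) / (A : ℝ) →
      |(B : ℝ) / (A : ℝ) -
          ((q2 : ℝ) + phi * ((q1 : ℝ) + (q2 : ℝ))) /
            ((p2 : ℝ) + phi * ((p1 : ℝ) + (p2 : ℝ)))| < ε := by
  set Dn : ℕ := p1 * q2 - q1 * p2 with hDn
  have hD1 : 0 < Dn := by omega
  set d : ℝ := (Dn : ℝ) with hdd
  have hd0 : (0:ℝ) < d := by rw [hdd]; exact_mod_cast hD1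
  refine ⟨⌈4 * d / ε⌉₊ + 1, fun A B h hP hN hr => ?_⟩
  -- basic positivity
  have hA1 : 1 ≤ A := by omega
  have hApos : (0:ℝ) < A := by exact_mod_cast hA1
  have hp1R : (1:ℝ) ≤ p1 := by exact_mod_cast hp1
  have hphi1 := one_lt_phi
  have hphi2 := phi_lt_two
  have hsq : phi ^ 2 = phi + 1 := phi_sq
  have hp2R : (0:ℝ) ≤ p2 := Nat.cast_nonneg _
  have hq1R : (0:ℝ) ≤ q1 := Nat.cast_nonneg _
  have hq2R : (0:ℝ) ≤ q2 := Nat.cast_nonneg _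
  -- the Wythoff pair
  set σ : ℕ := A * q2 - B * p2 with hσ
  set τ : ℕ := B * p1 - A * q1 with hτ
  set a : ℕ := σ / Dn with ha
  set b : ℕ := τ / Dn with hb
  have hWS : (a, b) ∈ WS := (char hp1 hq2 hD (A + B) A B le_rfl h).1 hP
  have hBQ1 : A * q1 ≤ B * p1 := h.1
  have hBQ2 : B * p2 ≤ A * q2 := h.2
  -- upper half: σ ≤ τ
  have hστ : σ ≤ τ := by
    have hpp : (0:ℝ) < (p1:ℝ) + p2 := by linarith
    have hx : ((q1:ℝ) + q2) * A ≤ B * ((p1:ℝ) + p2) := by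
      rw [div_le_div_iff₀ hpp hApos] at hr
      linarith
    have hxn : (q1 + q2) * A ≤ B * (p1 + p2) := by exact_mod_cast hx
    have : A * q1 + A * q2 ≤ B * p1 + B * p2 := by nlinarith [hxn]
    omega
  -- a ≤ b
  have e1 : a * Dn + σ % Dn = σ := by rw [ha]; exact Nat.div_add_mod' σ Dn
  have e2 : b * Dn + τ % Dn = τ := by rw [hb]; exact Nat.div_add_mod' τ Dn
  have m1 := Nat.mod_lt σ hD1
  have m2 := Nat.mod_lt τ hD1
  obtain ⟨idA, idB⟩ := sigma_tau_id hD h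
  have idA' : σ * p1 + τ * p2 = A * Dn := by rw [hσ, hτ, hDn]; exact idA
  have idB' : σ * q1 + τ * q2 = B * Dn := by rw [hσ, hτ, hDn]; exact idB
  have hd_eq : d = (p1:ℝ) * q2 - (q1:ℝ) * p2 := by
    rw [hdd, hDn]; push_cast [hD.le]; ring
  clear_value a b
  clear_value σ τ
  clear_value d
  clear_value Dn
  have hab : a ≤ b := by
    by_contra hab
    have h1 : b + 1 ≤ a := by omega
    have h2 : (b + 1) * Dn ≤ a * Dn := Nat.mul_le_mul_right _ h1
    have h3 : b * Dn + Dn ≤ a * Dn := by rw [add_mul, one_mul] at h2; exact h2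
    omega
  obtain ⟨hbd0, hbd1⟩ := WS_bound hWS hab
  -- real coordinates
  set x : ℝ := (σ : ℝ) with hx'
  set y : ℝ := (τ : ℝ) with hy'
  have ex : x = a * d + (σ % Dn : ℕ) := by
    rw [hx', hdd]; exact_mod_cast e1.symm
  have ey : y = b * d + (τ % Dn : ℕ) := by
    rw [hy', hdd]; exact_mod_cast e2.symm
  have r1b : (0:ℝ) ≤ ((σ % Dn : ℕ) : ℝ) ∧ ((σ % Dn : ℕ) : ℝ) < d := by
    constructor
    · exact Nat.cast_nonneg _
    · rw [hdd]; exact_mod_cast m1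
  have r2b : (0:ℝ) ≤ ((τ % Dn : ℕ) : ℝ) ∧ ((τ % Dn : ℕ) : ℝ) < d := by
    constructor
    · exact Nat.cast_nonneg _
    · rw [hdd]; exact_mod_cast m2
  -- bound on |y - phi x|
  have hbound : |y - phi * x| ≤ 4 * d := by
    have E : y - phi * x
        = ((b:ℝ) - phi * a) * d + (((τ % Dn : ℕ) : ℝ) - phi * ((σ % Dn : ℕ) : ℝ)) := by
      rw [ex, ey]; ring
    have u1 : ((b:ℝ) - phi * a) * d ≤ 1 * d :=
      mul_le_mul_of_nonneg_right hbd1.le hd0.le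
    have u2 : 0 ≤ ((b:ℝ) - phi * a) * d := mul_nonneg hbd0 hd0.le
    have u3 : phi * ((σ % Dn : ℕ) : ℝ) ≤ 2 * d :=
      mul_le_mul hphi2.le r1b.2.le r1b.1 (by norm_num)
    have u4 : 0 ≤ phi * ((σ % Dn : ℕ) : ℝ) := mul_nonneg (by linarith) r1b.1
    rw [abs_le]
    constructor
    · rw [E]; linarith [r2b.1, r2b.2]
    · rw [E]; linarith [r2b.1, r2b.2]
  -- linear identities
  have hA : (A : ℝ) * d = x * p1 + y * p2 := by
    rw [hx', hy', hdd]; exact_mod_cast idA'.symm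
  have hB : (B : ℝ) * d = x * q1 + y * q2 := by
    rw [hx', hy', hdd]; exact_mod_cast idB'.symm
  set P : ℝ := (p1:ℝ) + phi * p2 with hPdef
  have hPpos : 0 < P := by nlinarith
  have hP1 : 1 ≤ P := by nlinarith
  -- key equation
  have key : (B:ℝ) * P - ((q1:ℝ) + phi * q2) * A = y - phi * x := by
    have hmul : ((B:ℝ) * P - ((q1:ℝ) + phi * q2) * A) * d = (y - phi * x) * d := by
      rw [hPdef]
      linear_combination ((p1:ℝ) + phi * p2) * hB - ((q1:ℝ) + phi * q2) * hA -
        (y - phi * x) * hd_eq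
    exact mul_right_cancel₀ hd0.ne' hmul
  have eqn : (B:ℝ) / A - ((q1:ℝ) + phi * q2) / P = (y - phi * x) / (A * P) := by
    rw [div_sub_div _ _ hApos.ne' hPpos.ne']
    congr 1
    linarith [key]
  -- target constant rewriting
  have hden2 : (0:ℝ) < (p2:ℝ) + phi * ((p1:ℝ) + p2) := by nlinarith
  have hconst : ((q2:ℝ) + phi * ((q1:ℝ) + q2)) / ((p2:ℝ) + phi * ((p1:ℝ) + p2))
      = ((q1:ℝ) + phi * q2) / P := by
    rw [div_eq_div_iff hden2.ne' hPpos.ne', hPdef]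
    linear_combination ((q1:ℝ) * p2 - (q2:ℝ) * p1) * hsq
  rw [hconst, eqn]
  -- final estimate
  have hAP : (0:ℝ) < A * P := by positivity
  have hNd : 4 * d / ε < A := by
    have h1 : 4 * d / ε ≤ (⌈4 * d / ε⌉₊ : ℝ) := Nat.le_ceil _
    have h2 : ((⌈4 * d / ε⌉₊ + 1 : ℕ) : ℝ) ≤ A := by exact_mod_cast hN
    push_cast at h2
    linarith
  have h4d : 4 * d < ε * A := by
    rw [div_lt_iff₀ hε] at hNd
    linarith
  calc |(y - phi * x) / (A * P)| = |y - phi * x| / (A * P) := by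
        rw [abs_div, abs_of_pos hAP]
    _ ≤ 4 * d / (A * P) := by gcongr
    _ ≤ 4 * d / A := by
        rw [div_le_div_iff₀ hAP hApos]
        exact mul_le_mul_of_nonneg_left (le_mul_of_one_le_right hApos.le hP1)
          (by positivity : (0:ℝ) ≤ 4 * d)
    _ < ε := by
        rw [div_lt_iff₀ hApos]
        linarith
end

section
/- Let M ⊆ ℕ² \ {(0,0)} with {(0,1),(1,0)} ⊆ M, let (x,y) ∈ T_Q, and let (X,Y) = (x + A·p₁ + B·p₂, y + A·q₁ + B·q₂) for some A,B ∈ ℕ. Then every maximal sequence of legal moves of the Q-subtraction game G_Q(M) starting at (X,Y) ends at a terminal position belonging to T_Q, and that terminal position is exactly (x,y). -/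
lemma lattice_inBQ (p1 q1 p2 q2 x y : ℕ) (hD : q1 * p2 < p1 * q2)
    (hB : inBQ p1 q1 p2 q2 (x, y)) (a b : ℕ) :
    inBQ p1 q1 p2 q2 (x + a * p1 + b * p2, y + a * q1 + b * q2) := by
  obtain ⟨h1, h2⟩ := hB
  constructor <;> simp only <;> nlinarith [Nat.le_of_lt hD]

lemma rep_nonneg (p1 q1 p2 q2 x y : ℕ) (hD : q1 * p2 < p1 * q2)
    (hxy : inTQ p1 q1 p2 q2 (x, y)) (X Y : ℕ) (a b : ℤ)
    (hB : inBQ p1 q1 p2 q2 (X, Y))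
    (hX : (X : ℤ) = x + a * p1 + b * p2) (hY : (Y : ℤ) = y + a * q1 + b * q2) :
    0 ≤ a ∧ 0 ≤ b := by
  obtain ⟨⟨hb1, hb2⟩, ht1, ht2⟩ := hxy
  obtain ⟨hB1, hB2⟩ := hB
  simp only at *
  have hD' : (q1 : ℤ) * p2 < (p1 : ℤ) * q2 := by exact_mod_cast hD
  have hB1' : (X : ℤ) * q1 ≤ (Y : ℤ) * p1 := by exact_mod_cast hB1
  have hB2' : (Y : ℤ) * p2 ≤ (X : ℤ) * q2 := by exact_mod_cast hB2
  constructor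
  · by_contra h
    push_neg at h
    have ha : a ≤ -1 := by omega
    nlinarith [hB2', ht2]
  · by_contra h
    push_neg at h
    have hb : b ≤ -1 := by omega
    nlinarith [hB1', ht1]

theorem stmt_18 (p1 q1 p2 q2 : ℕ) (hp1 : 0 < p1) (hq2 : 0 < q2)
    (hD : q1 * p2 < p1 * q2)
    (M : Set (ℕ × ℕ)) (hM : (0, 0) ∉ M)
    (h01 : (0, 1) ∈ M) (h10 : (1, 0) ∈ M)
    (x y A B : ℕ) (hxy : inTQ p1 q1 p2 q2 (x, y))
    (k : ℕ) (f : ℕ → ℕ × ℕ)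
    (hstart : f 0 = (x + A * p1 + B * p2, y + A * q1 + B * q2))
    (hsteps : ∀ i < k, QMove p1 q1 p2 q2 M (f i) (f (i + 1)))
    (hmax : ¬ ∃ pos', QMove p1 q1 p2 q2 M (f k) pos') :
    inTQ p1 q1 p2 q2 (f k) ∧ f k = (x, y) := by
  -- invariant: every position along the play has the form (x+a p1+b p2, y+a q1+b q2)
  have inv : ∀ i ≤ k, ∃ a b : ℕ, f i = (x + a * p1 + b * p2, y + a * q1 + b * q2) := by
    intro i hi
    induction i with
    | zero => exact ⟨A, B, hstart⟩
    | succ n ih =>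
      obtain ⟨a, b, hab⟩ := ih (le_of_lt (Nat.lt_of_succ_le hi))
      obtain ⟨s, t, hst, hle1, hle2, he1, he2, hB'⟩ := hsteps n (Nat.lt_of_succ_le hi)
      rw [hab] at hle1 hle2 he1 he2
      simp only at hle1 hle2 he1 he2
      -- represent the new position with integer coefficients a-s, b-t
      have hX : ((f (n+1)).1 : ℤ) = x + ((a : ℤ) - s) * p1 + ((b : ℤ) - t) * p2 := by
        rw [he1]
        have : p1 * s + p2 * t ≤ x + a * p1 + b * p2 := hle1
        push_cast [Nat.cast_sub this]
        ring
      have hY : ((f (n+1)).2 : ℤ) = y + ((a : ℤ) - s) * q1 + ((b : ℤ) - t) * q2 := by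
        rw [he2]
        have : q1 * s + q2 * t ≤ y + a * q1 + b * q2 := hle2
        push_cast [Nat.cast_sub this]
        ring
      have hBp : inBQ p1 q1 p2 q2 ((f (n+1)).1, (f (n+1)).2) := by
        simpa using hB'
      obtain ⟨ha, hb⟩ := rep_nonneg p1 q1 p2 q2 x y hD hxy _ _ _ _ hBp hX hY
      have hsa : s ≤ a := by omega
      have htb : t ≤ b := by omega
      refine ⟨a - s, b - t, ?_⟩
      have h1 : (f (n+1)).1 = x + (a - s) * p1 + (b - t) * p2 := by
        have : ((f (n+1)).1 : ℤ) = ((x + (a - s) * p1 + (b - t) * p2 : ℕ) : ℤ) := by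
          rw [hX]; push_cast [Nat.cast_sub hsa, Nat.cast_sub htb]; ring
        exact_mod_cast this
      have h2 : (f (n+1)).2 = y + (a - s) * q1 + (b - t) * q2 := by
        have : ((f (n+1)).2 : ℤ) = ((y + (a - s) * q1 + (b - t) * q2 : ℕ) : ℤ) := by
          rw [hY]; push_cast [Nat.cast_sub hsa, Nat.cast_sub htb]; ring
        exact_mod_cast this
      exact Prod.ext h1 h2
  obtain ⟨a, b, hab⟩ := inv k le_rfl
  -- if a > 0 or b > 0, there is a legal move, contradicting maximality
  have ha0 : a = 0 := by
    by_contra h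
    apply hmax
    refine ⟨(x + (a - 1) * p1 + b * p2, y + (a - 1) * q1 + b * q2), 1, 0, h10, ?_, ?_, ?_, ?_, ?_⟩
    · rw [hab]; simp only; nlinarith [Nat.one_le_iff_ne_zero.mpr h]
    · rw [hab]; simp only; nlinarith [Nat.one_le_iff_ne_zero.mpr h]
    · rw [hab]; simp only
      have h1 : 1 ≤ a := Nat.one_le_iff_ne_zero.mpr h
      cases' Nat.exists_eq_add_of_le h1 with c hc
      subst hc; have hcc : 1 + c - 1 = c := by omega
      rw [hcc]; ring_nf; omega
    · rw [hab]; simp only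
      have h1 : 1 ≤ a := Nat.one_le_iff_ne_zero.mpr h
      cases' Nat.exists_eq_add_of_le h1 with c hc
      subst hc; have hcc : 1 + c - 1 = c := by omega
      rw [hcc]; ring_nf; omega
    · exact lattice_inBQ p1 q1 p2 q2 x y hD hxy.1 (a - 1) b
  have hb0 : b = 0 := by
    by_contra h
    apply hmax
    refine ⟨(x + a * p1 + (b - 1) * p2, y + a * q1 + (b - 1) * q2), 0, 1, h01, ?_, ?_, ?_, ?_, ?_⟩
    · rw [hab]; simp only; nlinarith [Nat.one_le_iff_ne_zero.mpr h]
    · rw [hab]; simp only; nlinarith [Nat.one_le_iff_ne_zero.mpr h]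
    · rw [hab]; simp only
      have h1 : 1 ≤ b := Nat.one_le_iff_ne_zero.mpr h
      cases' Nat.exists_eq_add_of_le h1 with c hc
      subst hc; have hcc : 1 + c - 1 = c := by omega
      rw [hcc]; ring_nf; omega
    · rw [hab]; simp only
      have h1 : 1 ≤ b := Nat.one_le_iff_ne_zero.mpr h
      cases' Nat.exists_eq_add_of_le h1 with c hc
      subst hc; have hcc : 1 + c - 1 = c := by omega
      rw [hcc]; ring_nf; omega
    · exact lattice_inBQ p1 q1 p2 q2 x y hD hxy.1 a (b - 1)
  subst ha0 hb0
  simp only [Nat.zero_mul, Nat.add_zero] at hab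
  exact ⟨hab ▸ hxy, hab⟩
end
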